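/- (Corollary 5.5, simplified a priori error bound, ℓ² version.) Suppose the weighting matrix is the identity, W̄ = I_{N·N_t}. Let x be a space-time function with r̄(x) = 0, and let x̃ ∈ S satisfy ‖r̄(x̃)‖₂ ≤ ‖r̄(w)‖₂ for all w ∈ S. Assume there exists s_A > 0 with ‖A_LM z‖₂ ≥ s_A ‖z‖₂ for all z ∈ ℝ^{N·N_t}, that σ_max(A_LM) ≥ s_A, and that Δt · L_f · σ_max(B_LM) < s_A. Define the Lebesgue constant Λ := (σ_max(A_LM) − s_A + 2·Δt·L_f·σ_max(B_LM)) / (s_A − Δt·L_f·σ_max(B_LM)). Then for every w ∈ S, ‖vec(x) − vec(x̃)‖₂ ≤ (1 + Λ) · ‖vec(x) − vec(w)‖₂. -/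

import Mathlib

noncomputable section

/-- A space-time function. -/
abbrev SpaceTime (N Nt : ℕ) := Fin Nt → EuclideanSpace ℝ (Fin N)

/-- Vectorization of a space-time function: stacks the blocks `w 0, …, w (Nt-1)`
into a single Euclidean vector of dimension `N * Nt`. -/
def vec {N Nt : ℕ} (w : SpaceTime N Nt) : EuclideanSpace ℝ (Fin Nt × Fin N) :=
  (WithLp.equiv 2 _).symm (fun p => w p.1 p.2)

/-- The largest singular value (ℓ² operator norm) of a real matrix. -/
def sigmaMax {m n : Type*} [Fintype m] [Fintype n] [DecidableEq n] (M : Matrix m n ℝ) : ℝ :=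
  ‖LinearMap.toContinuousLinearMap (Matrix.toEuclideanLin M)‖

/-- Matrix–vector multiplication as a map between Euclidean spaces. -/
def mulVecE {m n : Type*} [Fintype m] [Fintype n] [DecidableEq n] (M : Matrix m n ℝ)
    (v : EuclideanSpace ℝ n) : EuclideanSpace ℝ m :=
  Matrix.toEuclideanLin M v

/-- The stacked velocity `F̄(w)`: vectorization of `n ↦ f (w n, t n)`. -/
def Fbar {N Nt : ℕ} (f : EuclideanSpace ℝ (Fin N) × ℝ → EuclideanSpace ℝ (Fin N))
    (t : Fin Nt → ℝ) (w : SpaceTime N Nt) : EuclideanSpace ℝ (Fin Nt × Fin N) :=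
  vec (fun n => f (w n, t n))

/-- The space-time linear multistep residual `r̄(w) = A_LM vec(w) − Δt B_LM F̄(w) + b`. -/
def resid {N Nt : ℕ} (A_LM B_LM : Matrix (Fin Nt × Fin N) (Fin Nt × Fin N) ℝ)
    (b : EuclideanSpace ℝ (Fin Nt × Fin N)) (Δt : ℝ)
    (f : EuclideanSpace ℝ (Fin N) × ℝ → EuclideanSpace ℝ (Fin N))
    (t : Fin Nt → ℝ) (w : SpaceTime N Nt) : EuclideanSpace ℝ (Fin Nt × Fin N) :=
  mulVecE A_LM (vec w) - Δt • mulVecE B_LM (Fbar f t w) + b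

lemma mulVecE_sub {m n : Type*} [Fintype m] [Fintype n] [DecidableEq n]
    (M : Matrix m n ℝ) (u v : EuclideanSpace ℝ n) :
    mulVecE M (u - v) = mulVecE M u - mulVecE M v := map_sub _ _ _

lemma norm_mulVecE_le {m n : Type*} [Fintype m] [Fintype n] [DecidableEq n]
    (M : Matrix m n ℝ) (v : EuclideanSpace ℝ n) :
    ‖mulVecE M v‖ ≤ sigmaMax M * ‖v‖ :=
  (LinearMap.toContinuousLinearMap (Matrix.toEuclideanLin M)).le_opNorm v

lemma norm_vec_sq {N Nt : ℕ} (g : SpaceTime N Nt) : ‖vec g‖^2 = ∑ n, ‖g n‖^2 := by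
  have h : ∀ n, ‖g n‖^2 = ∑ i, ‖g n i‖^2 := fun n => by
    rw [EuclideanSpace.norm_eq, Real.sq_sqrt (by positivity)]
  rw [EuclideanSpace.norm_eq, Real.sq_sqrt (by positivity)]
  simp [h, Fintype.sum_prod_type, vec]

/-- Corollary 5.5, ℓ² version: simplified a priori error bound
for the unweighted (identity weighting matrix) case. -/
theorem simplified_apriori_l2_bound {N Nt : ℕ} (hN : 1 ≤ N) (hNt : 1 ≤ Nt)
    (t : Fin Nt → ℝ) (Δt : ℝ) (hΔt : 0 < Δt)
    (A_LM B_LM : Matrix (Fin Nt × Fin N) (Fin Nt × Fin N) ℝ)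
    (b : EuclideanSpace ℝ (Fin Nt × Fin N))
    (f : EuclideanSpace ℝ (Fin N) × ℝ → EuclideanSpace ℝ (Fin N))
    (L_f : ℝ) (hLf : 0 ≤ L_f)
    (hlip : ∀ (u v : EuclideanSpace ℝ (Fin N)) (n : Fin Nt),
      ‖f (u, t n) - f (v, t n)‖ ≤ L_f * ‖u - v‖)
    (S : Set (SpaceTime N Nt))
    (x : SpaceTime N Nt) (hx : resid A_LM B_LM b Δt f t x = 0)
    (xt : SpaceTime N Nt) (hxtS : xt ∈ S)
    (hopt : ∀ w ∈ S, ‖resid A_LM B_LM b Δt f t xt‖ ≤ ‖resid A_LM B_LM b Δt f t w‖)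
    (sA : ℝ) (hsA : 0 < sA)
    (hAlow : ∀ z : EuclideanSpace ℝ (Fin Nt × Fin N), sA * ‖z‖ ≤ ‖mulVecE A_LM z‖)
    (hAup : sA ≤ sigmaMax A_LM)
    (hdt : Δt * L_f * sigmaMax B_LM < sA) :
    ∀ w ∈ S, ‖vec x - vec xt‖ ≤
      (1 + (sigmaMax A_LM - sA + 2 * Δt * L_f * sigmaMax B_LM) /
        (sA - Δt * L_f * sigmaMax B_LM)) * ‖vec x - vec w‖ := by
  intro w hwS
  set c : ℝ := Δt * L_f * sigmaMax B_LM with hc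
  have hσB : 0 ≤ sigmaMax B_LM := norm_nonneg _
  have hc0 : 0 ≤ c := by positivity
  have hd : 0 < sA - c := by linarith
  -- Lipschitz bound for Fbar
  have hFlip : ∀ u v : SpaceTime N Nt,
      ‖Fbar f t u - Fbar f t v‖ ≤ L_f * ‖vec u - vec v‖ := by
    intro u v
    have h1 : Fbar f t u - Fbar f t v = vec (fun n => f (u n, t n) - f (v n, t n)) := rfl
    have h2 : vec u - vec v = vec (u - v) := rfl
    have hsq : ‖Fbar f t u - Fbar f t v‖^2 ≤ (L_f * ‖vec u - vec v‖)^2 := by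
      rw [h1, h2, norm_vec_sq, mul_pow, norm_vec_sq]
      rw [Finset.mul_sum]
      apply Finset.sum_le_sum
      intro n _
      have := hlip (u n) (v n) n
      have hnn : (0:ℝ) ≤ ‖f (u n, t n) - f (v n, t n)‖ := norm_nonneg _
      calc ‖f (u n, t n) - f (v n, t n)‖^2 ≤ (L_f * ‖u n - v n‖)^2 := by
            apply pow_le_pow_left₀ hnn this
        _ = L_f^2 * ‖(u - v) n‖^2 := by rw [mul_pow]; rfl
    have := Real.sqrt_le_sqrt hsq
    rwa [Real.sqrt_sq (norm_nonneg _), Real.sqrt_sq (by positivity)] at this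
  -- residual difference formula
  have hsub : ∀ u v : SpaceTime N Nt,
      resid A_LM B_LM b Δt f t u - resid A_LM B_LM b Δt f t v
        = mulVecE A_LM (vec u - vec v) - Δt • (mulVecE B_LM (Fbar f t u - Fbar f t v)) := by
    intro u v
    simp only [resid, mulVecE_sub, smul_sub]
    abel
  -- lower bound
  have hlow : ∀ u : SpaceTime N Nt,
      (sA - c) * ‖vec u - vec x‖ ≤ ‖resid A_LM B_LM b Δt f t u‖ := by
    intro u
    have heq : resid A_LM B_LM b Δt f t u
        = mulVecE A_LM (vec u - vec x) - Δt • (mulVecE B_LM (Fbar f t u - Fbar f t x)) := by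
      rw [← hsub u x, hx, sub_zero]
    rw [heq]
    have h1 := norm_sub_norm_le (mulVecE A_LM (vec u - vec x))
      (Δt • (mulVecE B_LM (Fbar f t u - Fbar f t x)))
    have h2 := hAlow (vec u - vec x)
    have h3 : ‖Δt • (mulVecE B_LM (Fbar f t u - Fbar f t x))‖
        ≤ Δt * (sigmaMax B_LM * (L_f * ‖vec u - vec x‖)) := by
      rw [norm_smul, Real.norm_eq_abs, abs_of_pos hΔt]
      apply mul_le_mul_of_nonneg_left _ hΔt.le
      calc ‖mulVecE B_LM (Fbar f t u - Fbar f t x)‖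
          ≤ sigmaMax B_LM * ‖Fbar f t u - Fbar f t x‖ := norm_mulVecE_le _ _
        _ ≤ sigmaMax B_LM * (L_f * ‖vec u - vec x‖) :=
            mul_le_mul_of_nonneg_left (hFlip u x) hσB
    nlinarith [norm_nonneg (vec u - vec x)]
  -- upper bound
  have hup : ‖resid A_LM B_LM b Δt f t w‖ ≤ (sigmaMax A_LM + c) * ‖vec w - vec x‖ := by
    have heq : resid A_LM B_LM b Δt f t w
        = mulVecE A_LM (vec w - vec x) - Δt • (mulVecE B_LM (Fbar f t w - Fbar f t x)) := by
      rw [← hsub w x, hx, sub_zero]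
    rw [heq]
    have h1 := norm_sub_le (mulVecE A_LM (vec w - vec x))
      (Δt • (mulVecE B_LM (Fbar f t w - Fbar f t x)))
    have h2 := norm_mulVecE_le A_LM (vec w - vec x)
    have h3 : ‖Δt • (mulVecE B_LM (Fbar f t w - Fbar f t x))‖
        ≤ Δt * (sigmaMax B_LM * (L_f * ‖vec w - vec x‖)) := by
      rw [norm_smul, Real.norm_eq_abs, abs_of_pos hΔt]
      apply mul_le_mul_of_nonneg_left _ hΔt.le
      calc ‖mulVecE B_LM (Fbar f t w - Fbar f t x)‖
          ≤ sigmaMax B_LM * ‖Fbar f t w - Fbar f t x‖ := norm_mulVecE_le _ _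
        _ ≤ sigmaMax B_LM * (L_f * ‖vec w - vec x‖) :=
            mul_le_mul_of_nonneg_left (hFlip w x) hσB
    have he : Δt * (sigmaMax B_LM * (L_f * ‖vec w - vec x‖)) = c * ‖vec w - vec x‖ := by
      rw [hc]; ring
    rw [he] at h3
    nlinarith
  -- combine
  have hchain : (sA - c) * ‖vec xt - vec x‖ ≤ (sigmaMax A_LM + c) * ‖vec w - vec x‖ :=
    le_trans (hlow xt) (le_trans (hopt w hwS) hup)
  have hΛ : 1 + (sigmaMax A_LM - sA + 2 * Δt * L_f * sigmaMax B_LM) / (sA - c)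
      = (sigmaMax A_LM + c) / (sA - c) := by
    rw [hc]
    field_simp [show sA - Δt * L_f * sigmaMax B_LM ≠ 0 from hd.ne']
    ring
  rw [hΛ, div_mul_eq_mul_div, le_div_iff₀ hd,
    norm_sub_rev (vec x) (vec xt), norm_sub_rev (vec x) (vec w)]
  linarith [hchain]
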